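/- Let μ be a finite positive measure on ℝ such that x ↦ x^n is μ-integrable for every n ≥ 0, and set s_n = ∫ x^n dμ(x). If the Hankel determinant D_k equals 0 for some k ≥ 0, then there exists a nonzero polynomial Q of degree at most k such that μ is concentrated on the zero set of Q (i.e. μ({x : Q(x) ≠ 0}) = 0); in particular μ is a discrete measure with at most k mass points. -/
import Mathlib


open MeasureTheory

/-- If a finite positive measure on `ℝ` has all moments and some Hankel determinant of its
moment sequence vanishes, say `D k = 0`, then the measure is concentrated on the zero set of
a nonzero polynomial of degree at most `k`; in particular it is a discrete measure with at
most `k` mass points. -/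
theorem measure_concentrated_of_hankel_det_eq_zero
    (μ : Measure ℝ) [IsFiniteMeasure μ]
    (hint : ∀ n : ℕ, Integrable (fun x : ℝ => x ^ n) μ)
    (s : ℕ → ℝ) (hs : ∀ n : ℕ, s n = ∫ x, x ^ n ∂μ)
    (k : ℕ) (hD : (Matrix.of fun i j : Fin (k + 1) => s (i.1 + j.1)).det = 0) :
    ∃ Q : Polynomial ℝ, Q ≠ 0 ∧ Q.degree ≤ k ∧ μ {x : ℝ | Q.eval x ≠ 0} = 0 := by
  -- get a nonzero kernel vector
  obtain ⟨v, hv0, hvM⟩ :=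
    (Matrix.exists_mulVec_eq_zero_iff).2 hD
  set M : Matrix (Fin (k + 1)) (Fin (k + 1)) ℝ :=
    Matrix.of fun i j : Fin (k + 1) => s (i.1 + j.1) with hM
  refine ⟨∑ i : Fin (k + 1), Polynomial.C (v i) * Polynomial.X ^ (i : ℕ), ?_, ?_, ?_⟩
  · -- nonzero
    obtain ⟨i, hi⟩ := Function.ne_iff.1 hv0
    have hi' : v i ≠ 0 := by simpa using hi
    intro h
    apply hi'
    have := congrArg (fun p => Polynomial.coeff p (i : ℕ)) h
    simp only [Polynomial.finset_sum_coeff, Polynomial.coeff_C_mul,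
      Polynomial.coeff_X_pow, Polynomial.coeff_zero] at this
    rw [Finset.sum_eq_single i] at this
    · simpa using this
    · intro j _ hj
      have hji : (i : ℕ) ≠ (j : ℕ) := fun h' => hj (Fin.ext h'.symm)
      simp [hji]
    · simp
  · -- degree
    refine (Polynomial.degree_sum_le _ _).trans ?_
    apply Finset.sup_le
    intro i _
    refine (Polynomial.degree_C_mul_X_pow_le _ _).trans ?_
    exact_mod_cast Nat.le_of_lt_succ i.2
  · -- concentration
    set Q : Polynomial ℝ := ∑ i : Fin (k + 1), Polynomial.C (v i) * Polynomial.X ^ (i : ℕ)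
    have heval : ∀ x : ℝ, Q.eval x = ∑ i : Fin (k + 1), v i * x ^ (i : ℕ) := by
      intro x; simp [Q, Polynomial.eval_finset_sum]
    have hterm : ∀ (i j : Fin (k + 1)),
        Integrable (fun x : ℝ => v i * v j * x ^ ((i : ℕ) + (j : ℕ))) μ :=
      fun i j => (hint _).const_mul _
    have hf : Integrable (fun x : ℝ => (Q.eval x) ^ 2) μ := by
      have : (fun x : ℝ => (Q.eval x) ^ 2) =
          fun x : ℝ => ∑ i : Fin (k + 1), ∑ j : Fin (k + 1),
            v i * v j * x ^ ((i : ℕ) + (j : ℕ)) := by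
        funext x
        rw [heval, sq, Finset.sum_mul_sum]
        refine Finset.sum_congr rfl fun i _ => Finset.sum_congr rfl fun j _ => ?_
        ring
      rw [this]
      exact integrable_finset_sum _ fun i _ => integrable_finset_sum _ fun j _ => hterm i j
    have hint0 : ∫ x, (Q.eval x) ^ 2 ∂μ = 0 := by
      have : ∫ x, (Q.eval x) ^ 2 ∂μ =
          ∑ i : Fin (k + 1), ∑ j : Fin (k + 1), v i * v j * s ((i : ℕ) + (j : ℕ)) := by
        have h1 : ∫ x, (Q.eval x) ^ 2 ∂μ =
            ∑ i : Fin (k + 1), ∫ x, ∑ j : Fin (k + 1),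
              v i * v j * x ^ ((i : ℕ) + (j : ℕ)) ∂μ := by
          rw [show (fun x : ℝ => (Q.eval x) ^ 2) =
              fun x : ℝ => ∑ i : Fin (k + 1), ∑ j : Fin (k + 1),
                v i * v j * x ^ ((i : ℕ) + (j : ℕ)) from by
            funext x
            rw [heval, sq, Finset.sum_mul_sum]
            refine Finset.sum_congr rfl fun i _ => Finset.sum_congr rfl fun j _ => ?_
            ring]
          exact integral_finset_sum _ fun i _ => integrable_finset_sum _ fun j _ => hterm i j
        rw [h1]
        refine Finset.sum_congr rfl fun i _ => ?_
        rw [integral_finset_sum _ fun j _ => hterm i j]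
        refine Finset.sum_congr rfl fun j _ => ?_
        rw [MeasureTheory.integral_const_mul, hs]
      rw [this]
      have : ∑ i : Fin (k + 1), ∑ j : Fin (k + 1), v i * v j * s ((i : ℕ) + (j : ℕ)) =
          dotProduct v (M.mulVec v) := by
        simp only [dotProduct, Matrix.mulVec, dotProduct, hM, Matrix.of_apply,
          Finset.mul_sum]
        refine Finset.sum_congr rfl fun i _ => Finset.sum_congr rfl fun j _ => ?_
        ring
      rw [this, hvM]
      simp
    have hae : (fun x => (Q.eval x) ^ 2) =ᵐ[μ] 0 :=
      (integral_eq_zero_iff_of_nonneg (fun x => sq_nonneg _) hf).1 hint0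
    have : {x : ℝ | Q.eval x ≠ 0} ⊆ {x : ℝ | ¬ (Q.eval x) ^ 2 = 0} := by
      intro x hx
      simp only [Set.mem_setOf_eq] at hx ⊢
      exact pow_ne_zero _ hx
    exact measure_mono_null this (by simpa [Filter.EventuallyEq, ae_iff] using hae)
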